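/- (Necessity direction of the Cautious Monotonicity rule.) Let P be a probability measure, and let A, B, C be measurable events with P(A ∩ B) > 0. Set x = P(C|A) and y = P(B|A). Then: (i) if x + y > 1 then P(C | A ∩ B) ≥ (x + y - 1)/y; (ii) if x < y then P(C | A ∩ B) ≤ x/y. -/

import Mathlib

open MeasureTheory

/-- Conditional probability `P(E|H) = P(E ∩ H) / P(H)` as a real number. -/
noncomputable def condProb {Ω : Type*} [MeasurableSpace Ω] (P : Measure Ω) (E H : Set Ω) : ℝ :=
  (P (E ∩ H)).toReal / (P H).toReal

/-- Necessity direction of the Cautious Monotonicity rule. -/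
theorem cautious_monotonicity_necessity {Ω : Type*} [MeasurableSpace Ω] (P : Measure Ω)
    [IsProbabilityMeasure P] (A B C : Set Ω)
    (hA : MeasurableSet A) (hB : MeasurableSet B) (hC : MeasurableSet C)
    (hPAB : 0 < P (A ∩ B)) :
    (condProb P C A + condProb P B A > 1 →
      condProb P C (A ∩ B) ≥ (condProb P C A + condProb P B A - 1) / condProb P B A) ∧
    (condProb P C A < condProb P B A →
      condProb P C (A ∩ B) ≤ condProb P C A / condProb P B A) := by
  have hPA : 0 < P A := lt_of_lt_of_le hPAB (measure_mono Set.inter_subset_left)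
  have hfin : ∀ s : Set Ω, P s ≠ ⊤ := fun s => measure_ne_top P s
  set a := (P A).toReal with ha
  set ab := (P (A ∩ B)).toReal with hab
  set ca := (P (C ∩ A)).toReal with hca
  set cab := (P (C ∩ (A ∩ B))).toReal with hcab
  have hapos : 0 < a := ENNReal.toReal_pos hPA.ne' (hfin A)
  have habpos : 0 < ab := ENNReal.toReal_pos hPAB.ne' (hfin _)
  have hBA : (P (B ∩ A)).toReal = ab := by rw [Set.inter_comm]
  -- key inclusion-exclusion inequality: ca + ab ≤ a + cab
  have hkey : ca + ab ≤ a + cab := by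
    have h1 : P (C ∩ A) + P (A ∩ B) = P ((C ∩ A) ∪ (A ∩ B)) + P ((C ∩ A) ∩ (A ∩ B)) :=
      (measure_union_add_inter _ (hA.inter hB)).symm
    have h2 : (C ∩ A) ∩ (A ∩ B) = C ∩ (A ∩ B) := by
      ext x; simp only [Set.mem_inter_iff]; tauto
    have h3 : P ((C ∩ A) ∪ (A ∩ B)) ≤ P A := by
      apply measure_mono
      rintro x (⟨_, hx⟩ | ⟨hx, _⟩) <;> exact hx
    rw [h2] at h1
    have h4 : P (C ∩ A) + P (A ∩ B) ≤ P A + P (C ∩ (A ∩ B)) := by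
      rw [h1]; exact add_le_add_left h3 _
    have := ENNReal.toReal_le_toReal (by simp [hfin, ENNReal.add_ne_top]) (by simp [hfin, ENNReal.add_ne_top]) |>.mpr h4
    rwa [ENNReal.toReal_add (hfin _) (hfin _), ENNReal.toReal_add (hfin _) (hfin _)] at this
  have hmono : cab ≤ ca := by
    apply ENNReal.toReal_le_toReal (hfin _) (hfin _) |>.mpr
    exact measure_mono (Set.inter_subset_inter_right _ Set.inter_subset_left)
  constructor
  · intro _
    show (ca / a + (P (B ∩ A)).toReal / a - 1) / ((P (B ∩ A)).toReal / a) ≤ cab / ab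
    have e1 : (ca / a + ab / a - 1) / (ab / a) = (ca + ab - a) / ab := by
      field_simp
    rw [hBA, e1, div_le_div_iff₀ habpos habpos]
    nlinarith
  · intro _
    show cab / ab ≤ (ca / a) / ((P (B ∩ A)).toReal / a)
    have e2 : (ca / a) / (ab / a) = ca / ab := by field_simp
    rw [hBA, e2, div_le_div_iff₀ habpos habpos]
    nlinarith
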